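/- Theorem (coherence bounds entanglement): Let |ψ⟩ be a pure state on L qubits, D a local product basis (e.g. any local Pauli basis), and R a subset of the qubits with reduced density matrix ρ_R = Tr_{R^c}[|ψ⟩⟨ψ|]. Then the entanglement entropy satisfies S(ρ_R) ≤ C(|ψ⟩,D), where C(|ψ⟩,D) is the relative entropy of coherence of |ψ⟩ in the basis D. -/

import Mathlib

open scoped BigOperators

noncomputable section

/-- Shannon entropy in bits. -/
def shannonEntropy {ι : Type*} [Fintype ι] (P : ι → ℝ) : ℝ :=
  ∑ i, -(P i * Real.logb 2 (P i))

/-- von Neumann entropy in bits of a Hermitian matrix, via its eigenvalues. -/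
def vonNeumannEntropy {n : Type*} [Fintype n] [DecidableEq n]
    (ρ : Matrix n n ℂ) (hρ : ρ.IsHermitian) : ℝ :=
  ∑ i, -(hρ.eigenvalues i * Real.logb 2 (hρ.eigenvalues i))

/-- Glue a configuration on a region `R` with one on its complement. -/
def merge {L : ℕ} (R : Finset (Fin L)) (a : {i // i ∈ R} → Bool)
    (c : {i // i ∉ R} → Bool) : Fin L → Bool :=
  fun i => if h : i ∈ R then a ⟨i, h⟩ else c ⟨i, h⟩

/-- Reduced density matrix of the pure state `ψ` (an `L`-qubit state written in
a local product basis) on the region `R`, obtained by tracing out `Rᶜ`. -/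
def reducedDM {L : ℕ} (R : Finset (Fin L)) (ψ : (Fin L → Bool) → ℂ) :
    Matrix ({i // i ∈ R} → Bool) ({i // i ∈ R} → Bool) ℂ :=
  fun a b => ∑ c : {i // i ∉ R} → Bool, ψ (merge R a c) * star (ψ (merge R b c))

/-- Superadditivity of `negMulLog` on nonnegative families
(entropy does not increase under marginalization, pointwise form). -/
lemma negMulLog_sum_le' {ι : Type*} [Fintype ι] (p : ι → ℝ) (hp : ∀ i, 0 ≤ p i) :
    Real.negMulLog (∑ i, p i) ≤ ∑ i, Real.negMulLog (p i) := by
  set d := ∑ i, p i with hd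
  have hd0 : 0 ≤ d := Finset.sum_nonneg fun i _ => hp i
  have h1 : Real.negMulLog d = ∑ i, -(p i * Real.log d) := by
    simp only [Real.negMulLog, neg_mul, ← Finset.sum_neg_distrib]
    rw [hd, Finset.sum_mul]
    simp
  rw [h1]
  apply Finset.sum_le_sum
  intro i _
  rcases eq_or_lt_of_le (hp i) with h0 | h0
  · simp [Real.negMulLog, ← h0]
  · have hpd : p i ≤ d := Finset.single_le_sum (fun j _ => hp j) (Finset.mem_univ i)
    have hlog : Real.log (p i) ≤ Real.log d := Real.log_le_log h0 hpd
    have := mul_le_mul_of_nonneg_left hlog (hp i)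
    simp only [Real.negMulLog, neg_mul]
    linarith

/-- The merging equivalence. -/
def mergeEquiv {L : ℕ} (R : Finset (Fin L)) :
    (({i // i ∈ R} → Bool) × ({i // i ∉ R} → Bool)) ≃ (Fin L → Bool) where
  toFun p := merge R p.1 p.2
  invFun s := (fun i => s i.1, fun i => s i.1)
  left_inv p := by
    ext i
    · simp [merge, i.2]
    · simp [merge, i.2]
  right_inv s := by
    funext i
    simp only [merge]
    split <;> rfl

open ComplexOrder

/-- coherence bounds entanglement: for a pure `L`-qubit state `ψ`
written in a local product basis `D`, and any subset `R` of the qubits,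
the entanglement entropy of `ρ_R` is bounded by the relative entropy of
coherence of `ψ` in `D`, which for a pure state is the Shannon entropy of
the outcome distribution `P(d) = |⟨d|ψ⟩|²`. -/
theorem entanglement_le_coherence {L : ℕ}
    (ψ : (Fin L → Bool) → ℂ) (hnorm : ∑ s, ‖ψ s‖ ^ 2 = 1)
    (R : Finset (Fin L)) (hR : (reducedDM R ψ).IsHermitian) :
    vonNeumannEntropy _ hR ≤ shannonEntropy (fun s => ‖ψ s‖ ^ 2) := by
  classical
  set f := Real.negMulLog with hf
  set lam := hR.eigenvalues with hlam
  -- positivity of eigenvalues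
  have hAeq : reducedDM R ψ = (Matrix.of fun a c => ψ (merge R a c)) *
      (Matrix.of fun a c => ψ (merge R a c)).conjTranspose := by
    ext a b
    simp [reducedDM, Matrix.mul_apply, Matrix.conjTranspose_apply]
  have hpsd : (reducedDM R ψ).PosSemidef := by
    rw [hAeq]; exact Matrix.posSemidef_self_mul_conjTranspose _
  have hev : ∀ i, 0 ≤ lam i := fun i => hpsd.eigenvalues_nonneg i
  -- unitary
  set U : Matrix ({i // i ∈ R} → Bool) ({i // i ∈ R} → Bool) ℂ := (hR.eigenvectorUnitary : Matrix ({i // i ∈ R} → Bool) ({i // i ∈ R} → Bool) ℂ) with hU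
  set w : _ → _ → ℝ := fun a i => ‖U a i‖ ^ 2 with hw
  have hrow : ∀ a, ∑ i, w a i = 1 := by
    intro a
    have h1 : U * star U = 1 := Matrix.mem_unitaryGroup_iff.mp hR.eigenvectorUnitary.2
    have h2 : (U * star U) a a = 1 := by rw [h1]; simp
    rw [Matrix.mul_apply] at h2
    simp only [Matrix.star_apply, Complex.star_def, Complex.mul_conj'] at h2
    exact_mod_cast h2
  have hcol : ∀ i, ∑ a, w a i = 1 := by
    intro i
    have h1 : star U * U = 1 := Matrix.mem_unitaryGroup_iff'.mp hR.eigenvectorUnitary.2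
    have h2 : (star U * U) i i = 1 := by rw [h1]; simp
    rw [Matrix.mul_apply] at h2
    simp only [Matrix.star_apply, Complex.star_def] at h2
    have h3 : ∑ a, U a i * (starRingEnd ℂ) (U a i) = 1 := by
      rw [← h2]; exact Finset.sum_congr rfl fun a _ => mul_comm _ _
    simp only [Complex.mul_conj'] at h3
    exact_mod_cast h3
  -- diagonal entries
  set P : ({i // i ∈ R} → Bool) → ℝ := fun a => ∑ c, ‖ψ (merge R a c)‖ ^ 2 with hP
  have hPA : ∀ a, (P a : ℂ) = reducedDM R ψ a a := by
    intro a
    simp only [hP, reducedDM, Complex.star_def, Complex.mul_conj']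
    push_cast
    rfl
  have hdiagC : ∀ a, reducedDM R ψ a a = ∑ i, (lam i : ℂ) * (w a i : ℂ) := by
    intro a
    conv_lhs => rw [hR.spectral_theorem, Unitary.conjStarAlgAut_apply]
    rw [Matrix.mul_apply]
    apply Finset.sum_congr rfl
    intro i _
    rw [Matrix.mul_diagonal]
    simp only [Matrix.star_apply, Complex.star_def, Function.comp_apply]
    rw [mul_comm (U a i) _, mul_assoc, Complex.mul_conj']
    simp only [hw, hlam]
    push_cast
    rfl
  have hdreal : ∀ a, P a = ∑ i, w a i * lam i := by
    intro a
    have h := (hPA a).trans (hdiagC a)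
    have h2 : ((∑ i, w a i * lam i : ℝ) : ℂ) = ∑ i, (lam i : ℂ) * (w a i : ℂ) := by
      push_cast
      exact Finset.sum_congr rfl fun i _ => mul_comm _ _
    exact_mod_cast h.trans h2.symm
  -- Jensen
  have hjen : ∀ a, ∑ i, w a i * f (lam i) ≤ f (P a) := by
    intro a
    have := Real.concaveOn_negMulLog.le_map_sum (t := Finset.univ) (w := w a)
      (p := lam) (fun i _ => sq_nonneg _) (hrow a) (fun i _ => hev i)
    simpa [smul_eq_mul, hdreal a] using this
  have hsum1 : ∑ i, f (lam i) ≤ ∑ a, f (P a) := by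
    calc ∑ i, f (lam i) = ∑ i, (∑ a, w a i) * f (lam i) := by
          simp only [hcol, one_mul]
      _ = ∑ a, ∑ i, w a i * f (lam i) := by
          rw [Finset.sum_comm]
          exact Finset.sum_congr rfl fun i _ => Finset.sum_mul _ _ _
      _ ≤ ∑ a, f (P a) := Finset.sum_le_sum fun a _ => hjen a
  -- marginalization
  have hsum2 : ∑ a, f (P a) ≤ ∑ s, f (‖ψ s‖ ^ 2) := by
    have step : ∀ a, f (P a) ≤ ∑ c, f (‖ψ (merge R a c)‖ ^ 2) := fun a =>
      negMulLog_sum_le' _ (fun c => sq_nonneg _)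
    refine le_trans (Finset.sum_le_sum fun a _ => step a) (le_of_eq ?_)
    exact (Fintype.sum_prod_type (f := fun p : (({i // i ∈ R} → Bool) × ({i // i ∉ R} → Bool)) =>
        f (‖ψ (merge R p.1 p.2)‖ ^ 2))).symm.trans
      (Fintype.sum_equiv (mergeEquiv R) _ _ (fun p => rfl))
  -- assemble
  have hlog2 : (0 : ℝ) < Real.log 2 := Real.log_pos one_lt_two
  have hV : vonNeumannEntropy _ hR = (∑ i, f (lam i)) / Real.log 2 := by
    unfold vonNeumannEntropy
    rw [Finset.sum_div]
    refine Finset.sum_congr rfl fun i _ => ?_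
    rw [hf, Real.logb, Real.negMulLog]
    ring
  have hS : shannonEntropy (fun s => ‖ψ s‖ ^ 2) = (∑ s, f (‖ψ s‖ ^ 2)) / Real.log 2 := by
    unfold shannonEntropy
    rw [Finset.sum_div]
    refine Finset.sum_congr rfl fun s _ => ?_
    rw [hf, Real.logb, Real.negMulLog]
    ring
  rw [hV, hS]
  gcongr
  exact le_trans hsum1 hsum2
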